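/- Consider a finite MDP with finite nonempty state set S, finite nonempty action set A, transition probabilities p : S × A × S → ℝ with p(s'|s,a) ≥ 0 and Σ_{s'} p(s'|s,a) = 1, reward r : S × A → ℝ, discount γ ∈ [0,1), and behavior policy μ : S × A → ℝ with μ(a|s) ≥ 0 and Σ_a μ(a|s) = 1. Let 0 < τ₁ < τ₂ < 1 and let V_{τ₁}, V_{τ₂} be τ₁- and τ₂-expectile value functions, with associated Q-functions Q_{τᵢ}(s,a) = r(s,a) + γ·Σ_{s'} p(s'|s,a)·V_{τᵢ}(s'). Then Q_{τ₁}(s,a) ≤ Q_{τ₂}(s,a) for every state s and action a. -/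

import Mathlib

open Finset

/-- `m` is the `τ`-expectile of the values `f` under the weights `w`. -/
def IsExpectile {A : Type*} [Fintype A] (τ : ℝ) (w f : A → ℝ) (m : ℝ) : Prop :=
  τ * ∑ a, w a * max (f a - m) 0 = (1 - τ) * ∑ a, w a * max (m - f a) 0

/-- `V` is a `τ`-expectile value function for the finite MDP `(p, r, γ)` and behavior
policy `μ`. -/
def IsExpectileValueFn {S A : Type*} [Fintype S] [Fintype A]
    (p : S → A → S → ℝ) (r : S → A → ℝ) (γ : ℝ) (μ : S → A → ℝ)
    (τ : ℝ) (V : S → ℝ) : Prop :=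
  ∀ s, IsExpectile τ (μ s) (fun a => r s a + γ * ∑ s', p s a s' * V s') (V s)

lemma term_bound (τ m₁ m₂ y : ℝ) (h : m₂ ≤ m₁) (h0 : 0 < τ) (h1 : τ < 1) :
    min τ (1 - τ) * (m₁ - m₂) ≤
      τ * (max (y - m₂) 0 - max (y - m₁) 0)
        - (1 - τ) * (max (m₂ - y) 0 - max (m₁ - y) 0) := by
  rcases le_total τ (1 - τ) with ht | ht <;>
    [rw [min_eq_left ht]; rw [min_eq_right ht]] <;>
  rcases max_cases (y - m₂) 0 with ⟨e1, f1⟩ | ⟨e1, f1⟩ <;>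
  rcases max_cases (y - m₁) 0 with ⟨e2, f2⟩ | ⟨e2, f2⟩ <;>
  rcases max_cases (m₂ - y) 0 with ⟨e3, f3⟩ | ⟨e3, f3⟩ <;>
  rcases max_cases (m₁ - y) 0 with ⟨e4, f4⟩ | ⟨e4, f4⟩ <;>
  rw [e1, e2, e3, e4] <;> nlinarith

lemma expectile_le {A : Type*} [Fintype A] (w f g : A → ℝ)
    (hw : ∀ a, 0 ≤ w a) (hws : ∑ a, w a = 1)
    (τ₁ τ₂ : ℝ) (h0 : 0 < τ₁) (h12 : τ₁ ≤ τ₂) (h1 : τ₂ < 1)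
    (hfg : ∀ a, f a ≤ g a) (m₁ m₂ : ℝ)
    (h₁ : IsExpectile τ₁ w f m₁) (h₂ : IsExpectile τ₂ w g m₂) : m₁ ≤ m₂ := by
  by_contra hc
  push_neg at hc
  set Sfp := ∑ a, w a * max (f a - m₁) 0 with hSfp
  set Sfm := ∑ a, w a * max (m₁ - f a) 0 with hSfm
  set Sgp1 := ∑ a, w a * max (g a - m₁) 0 with hSgp1
  set Sgm1 := ∑ a, w a * max (m₁ - g a) 0 with hSgm1
  set Sgp2 := ∑ a, w a * max (g a - m₂) 0 with hSgp2
  set Sgm2 := ∑ a, w a * max (m₂ - g a) 0 with hSgm2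
  have nonneg : ∀ (h : A → ℝ) (m : ℝ), (0:ℝ) ≤ ∑ a, w a * max (h a - m) 0 :=
    fun h m => Finset.sum_nonneg fun a _ => mul_nonneg (hw a) (le_max_right _ _)
  have nonneg' : ∀ (h : A → ℝ) (m : ℝ), (0:ℝ) ≤ ∑ a, w a * max (m - h a) 0 :=
    fun h m => Finset.sum_nonneg fun a _ => mul_nonneg (hw a) (le_max_right _ _)
  have hSfp0 : 0 ≤ Sfp := nonneg f m₁
  have hSfm0 : 0 ≤ Sfm := nonneg' f m₁
  -- monotonicity in f
  have B1 : Sfp ≤ Sgp1 := Finset.sum_le_sum fun a _ =>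
    mul_le_mul_of_nonneg_left (max_le_max (by linarith [hfg a]) le_rfl) (hw a)
  have B2 : Sgm1 ≤ Sfm := Finset.sum_le_sum fun a _ =>
    mul_le_mul_of_nonneg_left (max_le_max (by linarith [hfg a]) le_rfl) (hw a)
  -- strict decrease in m
  set c := min τ₂ (1 - τ₂) with hcdef
  have hc0 : 0 < c := lt_min (by linarith) (by linarith)
  have Cterm : ∀ a : A, w a * (c * (m₁ - m₂)) ≤
      w a * (τ₂ * (max (g a - m₂) 0 - max (g a - m₁) 0)
        - (1 - τ₂) * (max (m₂ - g a) 0 - max (m₁ - g a) 0)) := fun a =>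
    mul_le_mul_of_nonneg_left (term_bound τ₂ m₁ m₂ (g a) hc.le (by linarith) h1) (hw a)
  have Csum := Finset.sum_le_sum (fun a (_ : a ∈ Finset.univ) => Cterm a)
  have hL : ∑ a, w a * (c * (m₁ - m₂)) = c * (m₁ - m₂) := by
    rw [← Finset.sum_mul, hws, one_mul]
  have hR : ∑ a, (w a * (τ₂ * (max (g a - m₂) 0 - max (g a - m₁) 0)
        - (1 - τ₂) * (max (m₂ - g a) 0 - max (m₁ - g a) 0)))
      = τ₂ * Sgp2 - τ₂ * Sgp1 - (1 - τ₂) * Sgm2 + (1 - τ₂) * Sgm1 := by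
    have e : ∀ a : A, w a * (τ₂ * (max (g a - m₂) 0 - max (g a - m₁) 0)
        - (1 - τ₂) * (max (m₂ - g a) 0 - max (m₁ - g a) 0))
        = τ₂ * (w a * max (g a - m₂) 0) - τ₂ * (w a * max (g a - m₁) 0)
          - (1 - τ₂) * (w a * max (m₂ - g a) 0)
          + (1 - τ₂) * (w a * max (m₁ - g a) 0) := fun a => by ring
    simp_rw [e, Finset.sum_add_distrib, Finset.sum_sub_distrib, ← Finset.mul_sum]
    rfl
  rw [hL, hR] at Csum
  -- combine everything
  unfold IsExpectile at h₁ h₂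
  rw [← hSfp, ← hSfm] at h₁
  rw [← hSgp2, ← hSgm2] at h₂
  have hcd : 0 < c * (m₁ - m₂) := mul_pos hc0 (by linarith)
  have m1 : τ₂ * Sfp ≤ τ₂ * Sgp1 := mul_le_mul_of_nonneg_left B1 (by linarith)
  have m2 : (1 - τ₂) * Sgm1 ≤ (1 - τ₂) * Sfm := mul_le_mul_of_nonneg_left B2 (by linarith)
  have m3 : 0 ≤ (τ₂ - τ₁) * (Sfp + Sfm) := mul_nonneg (by linarith) (by linarith)
  nlinarith

/-- For `0 < τ₁ < τ₂ < 1` and expectile value functions `V₁, V₂`, the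
associated Q-functions `Qᵢ(s,a) = r(s,a) + γ·Σ_{s'} p(s'|s,a)·Vᵢ(s')` satisfy
`Q₁(s,a) ≤ Q₂(s,a)` for every state `s` and action `a`. -/
theorem expectile_q_function_mono_in_tau
    {S A : Type*} [Fintype S] [Nonempty S] [Fintype A] [Nonempty A]
    (p : S → A → S → ℝ) (hp : ∀ s a s', 0 ≤ p s a s')
    (hps : ∀ s a, ∑ s', p s a s' = 1)
    (r : S → A → ℝ) (γ : ℝ) (hγ : γ ∈ Set.Ico (0 : ℝ) 1)
    (μ : S → A → ℝ) (hμ : ∀ s a, 0 ≤ μ s a) (hμs : ∀ s, ∑ a, μ s a = 1)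
    (τ₁ τ₂ : ℝ) (h0 : 0 < τ₁) (h12 : τ₁ < τ₂) (h1 : τ₂ < 1)
    (V₁ V₂ : S → ℝ)
    (hV₁ : IsExpectileValueFn p r γ μ τ₁ V₁)
    (hV₂ : IsExpectileValueFn p r γ μ τ₂ V₂) :
    ∀ s a, r s a + γ * ∑ s', p s a s' * V₁ s'
      ≤ r s a + γ * ∑ s', p s a s' * V₂ s' := by
  have hshift : ∀ (s : S) (cst : ℝ), IsExpectile τ₂ (μ s)
      (fun a => (r s a + γ * ∑ s', p s a s' * V₂ s') + cst) (V₂ s + cst) := by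
    intro s cst
    have h := hV₂ s
    unfold IsExpectile at h ⊢
    simpa [add_sub_add_right_eq_sub] using h
  obtain ⟨s₀, hs₀⟩ := Finite.exists_max (fun s => V₁ s - V₂ s)
  set D := V₁ s₀ - V₂ s₀ with hD
  have key : ∀ s a, ∑ s', p s a s' * V₁ s' ≤ (∑ s', p s a s' * V₂ s') + max D 0 := by
    intro s a
    have h : ∑ s', p s a s' * V₁ s'
        ≤ ∑ s', (p s a s' * V₂ s' + p s a s' * max D 0) := by
      apply Finset.sum_le_sum
      intro s' _
      have h1 : V₁ s' - V₂ s' ≤ D := hs₀ s'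
      have h2 : V₁ s' ≤ V₂ s' + max D 0 := by
        have := le_max_left D 0; linarith
      nlinarith [mul_le_mul_of_nonneg_left h2 (hp s a s')]
    rw [Finset.sum_add_distrib, ← Finset.sum_mul, hps s a, one_mul] at h
    exact h
  have hVle : ∀ s, V₁ s ≤ V₂ s + γ * max D 0 := by
    intro s
    refine expectile_le (μ s) _ _ (hμ s) (hμs s) τ₁ τ₂ h0 h12.le h1 ?_ _ _
      (hV₁ s) (hshift s (γ * max D 0))
    intro a
    have := mul_le_mul_of_nonneg_left (key s a) hγ.1
    nlinarith
  have hDle : D ≤ γ * max D 0 := by have := hVle s₀; linarith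
  have hD0 : D ≤ 0 := by
    by_contra hpos
    push_neg at hpos
    rw [max_eq_left hpos.le] at hDle
    nlinarith [hγ.2]
  have hVle' : ∀ s, V₁ s ≤ V₂ s := fun s => by have := hs₀ s; linarith
  intro s a
  have hsum : ∑ s', p s a s' * V₁ s' ≤ ∑ s', p s a s' * V₂ s' :=
    Finset.sum_le_sum fun s' _ => mul_le_mul_of_nonneg_left (hVle' s') (hp s a s')
  have := mul_le_mul_of_nonneg_left hsum hγ.1
  linarith
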